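/- Let G be a graph with a vertex partition H_1, ..., H_k (levels), let l(v) denote the level of v, and suppose every vertex v has at most d neighbours u with l(u) ≥ l(v). Then G admits a proper edge colouring with at most Δ + d - 1 colours, where Δ is the maximum degree of G, and moreover each edge uv with l(u) ≤ l(v) receives a colour in {1, ..., deg(v) + d - 1}. -/
import Mathlib

open scoped Classical

noncomputable def col {V : Type*} [Fintype V] (rank : Sym2 V → ℕ) (E : Finset (Sym2 V)) : Sym2 V → ℕ :=
  fun e =>
    sInf {n | 1 ≤ n ∧ n ∉ ((E.filter fun e' => rank e' < rank e ∧ ∃ x, x ∈ e' ∧ x ∈ e).attach.image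
      fun e' => col rank E e'.1)}
termination_by e => rank e
decreasing_by exact (Finset.mem_filter.mp e'.2).2.1

noncomputable def Fcol {V : Type*} [Fintype V] (rank : Sym2 V → ℕ) (E : Finset (Sym2 V)) (e : Sym2 V) :
    Finset ℕ :=
  (E.filter fun e' => rank e' < rank e ∧ ∃ x, x ∈ e' ∧ x ∈ e).image (col rank E)

lemma col_eq {V : Type*} [Fintype V] (rank : Sym2 V → ℕ) (E : Finset (Sym2 V)) (e : Sym2 V) :
    col rank E e = sInf {n | 1 ≤ n ∧ n ∉ Fcol rank E e} := by
  rw [col]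
  congr 1
  ext n
  simp [Fcol, Finset.mem_image]

lemma col_spec {V : Type*} [Fintype V] (rank : Sym2 V → ℕ) (E : Finset (Sym2 V)) (e : Sym2 V) :
    1 ≤ col rank E e ∧ col rank E e ∉ Fcol rank E e ∧
      col rank E e ≤ (Fcol rank E e).card + 1 := by
  set F := Fcol rank E e with hF
  have hex : ∃ n, n ∈ Finset.Icc 1 (F.card + 1) ∧ n ∉ F := by
    by_contra h
    push_neg at h
    have hsub : Finset.Icc 1 (F.card + 1) ⊆ F := fun n hn => h n hn
    have := Finset.card_le_card hsub
    simp [Nat.card_Icc] at this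
  obtain ⟨n, hn1, hn2⟩ := hex
  have hne : {m | 1 ≤ m ∧ m ∉ F}.Nonempty := ⟨n, (Finset.mem_Icc.mp hn1).1, hn2⟩
  have hmem := Nat.sInf_mem hne
  rw [col_eq]
  refine ⟨hmem.1, hmem.2, ?_⟩
  calc sInf {m | 1 ≤ m ∧ m ∉ F} ≤ n := Nat.sInf_le ⟨(Finset.mem_Icc.mp hn1).1, hn2⟩
    _ ≤ F.card + 1 := (Finset.mem_Icc.mp hn1).2

/-- Given a vertex partition into levels `1, ..., k` such that every vertex `v` has
at most `d` neighbours `u` with `l u ≥ l v`, the graph has a proper edge colouring with at most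
`Δ + d - 1` colours, where each edge `uv` with `l u ≤ l v` gets a colour in
`{1, ..., deg v + d - 1}`. -/
theorem stmt9 {V : Type*} [Fintype V] (G : SimpleGraph V) (k d : ℕ)
    (l : V → ℕ) (hl : ∀ v, 1 ≤ l v ∧ l v ≤ k)
    (hout : ∀ v : V, (Finset.univ.filter fun u => G.Adj v u ∧ l v ≤ l u).card ≤ d) :
    ∃ f : Sym2 V → ℕ,
      (∀ u v w : V, G.Adj u v → G.Adj u w → v ≠ w → f s(u, v) ≠ f s(u, w)) ∧
      (∀ u v : V, G.Adj u v → 1 ≤ f s(u, v) ∧ f s(u, v) ≤ G.maxDegree + d - 1 ∧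
        (l u ≤ l v → f s(u, v) ≤ G.degree v + d - 1)) := by
  set N := Fintype.card (Sym2 V) with hN
  set enc : Sym2 V → ℕ := fun e => (Fintype.equivFin (Sym2 V) e : ℕ) with henc
  have henc_lt : ∀ e, enc e < N := fun e => (Fintype.equivFin (Sym2 V) e).2
  have henc_inj : Function.Injective enc := fun a b h =>
    (Fintype.equivFin (Sym2 V)).injective (Fin.ext h)
  set key : Sym2 V → ℕ :=
    fun e => Sym2.lift ⟨fun a b => min (l a) (l b), fun a b => min_comm _ _⟩ e with hkeydef
  have hkey : ∀ u v : V, key s(u, v) = min (l u) (l v) := fun u v => rfl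
  have hkeyk : ∀ e : Sym2 V, key e ≤ k := by
    intro e
    induction e using Sym2.ind with
    | _ u v => rw [hkey]; exact le_trans (min_le_left _ _) (hl u).2
  set rank : Sym2 V → ℕ := fun e => enc e + (k - key e) * N with hrankdef
  have hrank_inj : Function.Injective rank := by
    intro a b h
    apply henc_inj
    have ha := henc_lt a
    have hb := henc_lt b
    have hmod : rank a % N = rank b % N := by rw [h]
    simp only [hrankdef, Nat.add_mul_mod_self_right] at hmod
    rwa [Nat.mod_eq_of_lt ha, Nat.mod_eq_of_lt hb] at hmod
  have hrank_key : ∀ e e' : Sym2 V, rank e' < rank e → key e ≤ key e' := by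
    intro e e' h
    have hN0 : 0 < N := Fintype.card_pos_iff.mpr ⟨e⟩
    have he := henc_lt e
    have he' := henc_lt e'
    simp only [hrankdef] at h
    have h1 : k - key e' ≤ k - key e := by
      by_contra hc
      push_neg at hc
      have h2 : (k - key e) * N + N ≤ (k - key e') * N := by
        calc (k - key e) * N + N = ((k - key e) + 1) * N := by ring
          _ ≤ (k - key e') * N := Nat.mul_le_mul_right N hc
      omega
    have hk1 := hkeyk e
    have hk2 := hkeyk e'
    omega
  set E := G.edgeFinset with hE
  -- membership of edges
  have hmemE : ∀ u v : V, G.Adj u v → s(u, v) ∈ E := by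
    intro u v huv
    rw [hE, SimpleGraph.mem_edgeFinset, SimpleGraph.mem_edgeSet]
    exact huv
  -- main bound
  have main : ∀ u v : V, G.Adj u v → l u ≤ l v →
      (Fcol rank E s(u, v)).card + 1 ≤ G.degree v + d - 1 := by
    intro u v huv hluv
    set e := s(u, v) with hedef
    have heE : e ∈ E := hmemE u v huv
    set T := E.filter (fun e' => rank e' < rank e ∧ ∃ x, x ∈ e' ∧ x ∈ e) with hT
    have hFcard : (Fcol rank E e).card ≤ T.card := by
      unfold Fcol
      rw [hT]
      exact Finset.card_image_le
    set A := E.filter (fun e' => e' ≠ e ∧ v ∈ e') with hA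
    set B := T.filter (fun e' => u ∈ e' ∧ v ∉ e') with hBdef
    have hTsub : T ⊆ A ∪ B := by
      intro e' he'
      have h1 := Finset.mem_filter.mp he'
      obtain ⟨x, hx1, hx2⟩ := h1.2.2
      by_cases hv : v ∈ e'
      · refine Finset.mem_union_left _ (Finset.mem_filter.mpr ⟨h1.1, ?_, hv⟩)
        rintro rfl
        exact lt_irrefl _ h1.2.1
      · refine Finset.mem_union_right _ (Finset.mem_filter.mpr ⟨he', ?_, hv⟩)
        rcases Sym2.mem_iff.mp hx2 with rfl | rfl
        · exact hx1
        · exact absurd hx1 hv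
    -- A bound
    have hAsub : A ⊆ G.incidenceFinset v := by
      intro e' he'
      have h1 := Finset.mem_filter.mp he'
      rw [SimpleGraph.mem_incidenceFinset]
      exact ⟨SimpleGraph.mem_edgeFinset.mp h1.1, h1.2.2⟩
    have heInc : e ∈ G.incidenceFinset v := by
      rw [SimpleGraph.mem_incidenceFinset]
      exact ⟨G.mem_edgeSet.mpr huv, by simp [hedef]⟩
    have heA : e ∉ A := by simp [hA]
    have hAcard : A.card < G.degree v := by
      rw [← SimpleGraph.card_incidenceFinset_eq_degree]
      exact Finset.card_lt_card ⟨hAsub, fun h => heA (h heInc)⟩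
    -- B bound
    set S := Finset.univ.filter (fun w => G.Adj u w ∧ l u ≤ l w) with hS
    have hScard : S.card ≤ d := hout u
    have hvS : v ∈ S := by
      rw [hS, Finset.mem_filter]
      exact ⟨Finset.mem_univ _, huv, hluv⟩
    set g : Sym2 V → V := fun e' => if h : u ∈ e' then Sym2.Mem.other' h else u with hg
    have hgB : ∀ e' ∈ B, s(u, g e') = e' ∧ g e' ∈ S.erase v := by
      intro e' he'
      have h1 := Finset.mem_filter.mp he'
      have h2 := Finset.mem_filter.mp h1.1
      obtain ⟨hu, hv⟩ := h1.2
      have hspec : s(u, g e') = e' := by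
        rw [hg]
        simp only [hu, dif_pos]
        exact Sym2.other_spec' hu
      refine ⟨hspec, ?_⟩
      have hgmem : g e' ∈ e' := by
        have h3 := Sym2.mem_mk_right u (g e')
        rwa [hspec] at h3
      have hgv : g e' ≠ v := fun h => hv (h ▸ hgmem)
      have hadj : G.Adj u (g e') := by
        have : e' ∈ G.edgeFinset := h2.1
        rw [← hspec] at this
        exact G.mem_edgeSet.mp (SimpleGraph.mem_edgeFinset.mp this)
      have hlev : l u ≤ l (g e') := by
        have hk := hrank_key e e' h2.2.1
        rw [hedef, ← hspec, hkey, hkey, min_eq_left hluv] at hk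
        exact (le_min_iff.mp hk).2
      exact Finset.mem_erase.mpr ⟨hgv, by rw [hS, Finset.mem_filter]; exact ⟨Finset.mem_univ _, hadj, hlev⟩⟩
    have hBcard : B.card ≤ (S.erase v).card := by
      apply Finset.card_le_card_of_injOn g (fun e' he' => (hgB e' he').2)
      intro e1 h1 e2 h2 hgeq
      rw [← (hgB e1 h1).1, ← (hgB e2 h2).1, hgeq]
    have hScard' : (S.erase v).card = S.card - 1 := Finset.card_erase_of_mem hvS
    have hd1 : 1 ≤ d := le_trans (Finset.card_pos.mpr ⟨v, hvS⟩) hScard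
    have hdeg1 : 1 ≤ G.degree v := by omega
    have hT1 := Finset.card_le_card hTsub
    have hT2 := Finset.card_union_le A B
    omega
  refine ⟨col rank E, ?_, ?_⟩
  · -- properness
    intro u v w huv huw hvw
    have h1 : s(u, v) ∈ E := hmemE u v huv
    have h2 : s(u, w) ∈ E := hmemE u w huw
    have hne : s(u, v) ≠ s(u, w) := fun h => hvw (Sym2.congr_right.mp h)
    have hrne : rank s(u, v) ≠ rank s(u, w) := fun h => hne (hrank_inj h)
    rcases hrne.lt_or_gt with hlt | hlt
    · intro hc
      apply (col_spec rank E s(u, w)).2.1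
      rw [← hc]
      exact Finset.mem_image.mpr ⟨s(u, v), Finset.mem_filter.mpr
        ⟨h1, hlt, ⟨u, by simp, by simp⟩⟩, rfl⟩
    · intro hc
      apply (col_spec rank E s(u, v)).2.1
      rw [hc]
      exact Finset.mem_image.mpr ⟨s(u, w), Finset.mem_filter.mpr
        ⟨h2, hlt, ⟨u, by simp, by simp⟩⟩, rfl⟩
  · intro u v huv
    have hsp := col_spec rank E s(u, v)
    refine ⟨hsp.1, ?_, ?_⟩
    · rcases le_total (l u) (l v) with h | h
      · have := main u v huv h
        have hb := hsp.2.2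
        have hdeg := G.degree_le_maxDegree v
        omega
      · have := main v u huv.symm h
        have hb := (col_spec rank E s(v, u)).2.2
        have hdeg := G.degree_le_maxDegree u
        have hswap : s(u, v) = s(v, u) := Sym2.eq_swap
        rw [hswap]
        omega
    · intro h
      have := main u v huv h
      have hb := hsp.2.2
      omega
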